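/- arXiv:2004.02567 — 4 statements merged into one kernel-verified Lean document; each statement's English description precedes it below -/
import Mathlib

section
/- Let R ∈ [0, π/2) and let k be a natural number with k ≥ 1 + 1/(cot R)^2. Then for every d ∈ [0, R] and every t ∈ [0, 1], sin(d·t) ≤ t^(1/k) · sin(d). -/
open Real

private lemma key_sin_lt (R : ℝ) (hR : R < π / 2)
    (k : ℕ) (hk : 1 / Real.cos R ^ 2 ≤ (k : ℝ)) {x : ℝ} (hx : 0 < x) (hxR : x ≤ R) :
    Real.sin x < (k : ℝ) * (x * Real.cos x) := by
  have hcRpos : 0 < Real.cos R := by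
    apply Real.cos_pos_of_mem_Ioo
    constructor
    · nlinarith [Real.pi_pos, hx.trans_le hxR]
    · exact hR
  have hcx : Real.cos R ≤ Real.cos x := by
    apply Real.cos_le_cos_of_nonneg_of_le_pi hx.le _ hxR
    nlinarith [Real.pi_pos]
  have hcxpos : 0 < Real.cos x := hcRpos.trans_le hcx
  have hcx1 : Real.cos x ≤ 1 := Real.cos_le_one x
  have hsinlt : Real.sin x < x := Real.sin_lt hx
  have hk0 : (0:ℝ) < (k : ℝ) := lt_of_lt_of_le (by positivity) hk
  have hk2 : 1 ≤ (k : ℝ) * Real.cos x ^ 2 := by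
    have h1 : 1 ≤ (k : ℝ) * Real.cos R ^ 2 := by
      rw [div_le_iff₀ (by positivity)] at hk
      linarith
    nlinarith [mul_le_mul_of_nonneg_left (by nlinarith : Real.cos R ^ 2 ≤ Real.cos x ^ 2) hk0.le]
  nlinarith [mul_pos hx hcxpos]

theorem sin_mul_le_rpow_mul_sin (R : ℝ) (hR0 : 0 ≤ R) (hR : R < π / 2)
    (k : ℕ) (hk : (1 : ℝ) + 1 / Real.cot R ^ 2 ≤ (k : ℝ)) :
    ∀ d ∈ Set.Icc (0 : ℝ) R, ∀ t ∈ Set.Icc (0 : ℝ) 1,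
      Real.sin (d * t) ≤ t ^ ((1 : ℝ) / (k : ℝ)) * Real.sin d := by
  have hk1 : (1 : ℝ) ≤ (k : ℝ) := by
    have : 0 ≤ 1 / Real.cot R ^ 2 := by positivity
    linarith
  have hkne : k ≠ 0 := by
    intro h; rw [h] at hk1; norm_num at hk1
  rintro d ⟨hd0, hdR⟩ t ⟨ht0, ht1⟩
  -- dispatch degenerate cases
  rcases eq_or_lt_of_le ht0 with rfl | ht0
  · have hkpos : (0:ℝ) < (k:ℝ) := by linarith
    rw [mul_zero, Real.sin_zero, Real.zero_rpow (by positivity), zero_mul]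
  rcases eq_or_lt_of_le hd0 with rfl | hd0
  · simp
  rcases eq_or_lt_of_le ht1 with rfl | ht1
  · simp
  -- now 0 < d ≤ R, 0 < t < 1
  have hRpos : 0 < R := hd0.trans_le hdR
  -- convert hk to 1/cos R^2 ≤ k
  have hsinR : 0 < Real.sin R := by
    apply Real.sin_pos_of_pos_of_lt_pi hRpos
    nlinarith [Real.pi_pos]
  have hcosR : 0 < Real.cos R := by
    apply Real.cos_pos_of_mem_Ioo
    exact ⟨by nlinarith [Real.pi_pos], hR⟩
  have hk' : 1 / Real.cos R ^ 2 ≤ (k : ℝ) := by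
    have hcot : Real.cot R = Real.cos R / Real.sin R := Real.cot_eq_cos_div_sin R
    have hpyth := Real.sin_sq_add_cos_sq R
    have heq : (1 : ℝ) + 1 / Real.cot R ^ 2 = 1 / Real.cos R ^ 2 := by
      rw [hcot]
      field_simp
      linarith [hpyth]
    linarith [heq ▸ hk]
  -- key: sin(dt)^k / t is strictly monotone on (0,1]
  set f : ℝ → ℝ := fun s => Real.sin (d * s) ^ k / s with hf
  have hderiv : ∀ s ∈ Set.Ioo (0:ℝ) 1, HasDerivAt f
      (((k : ℝ) * Real.sin (d * s) ^ (k - 1) * (Real.cos (d * s) * d) * s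
        - Real.sin (d * s) ^ k * 1) / s ^ 2) s := by
    intro s hs
    have h1 : HasDerivAt (fun s : ℝ => d * s) d s := by
      simpa using (hasDerivAt_id s).const_mul d
    have h2 : HasDerivAt (fun s : ℝ => Real.sin (d * s)) (Real.cos (d * s) * d) s :=
      (Real.hasDerivAt_sin (d * s)).comp s h1
    have h3 : HasDerivAt (fun s : ℝ => Real.sin (d * s) ^ k)
        ((k : ℝ) * Real.sin (d * s) ^ (k - 1) * (Real.cos (d * s) * d)) s := h2.pow k
    exact h3.div (hasDerivAt_id s) (ne_of_gt hs.1)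
  have hmono : StrictMonoOn f (Set.Ioc (0:ℝ) 1) := by
    apply strictMonoOn_of_deriv_pos (convex_Ioc 0 1)
    · apply ContinuousOn.div
      · exact (Continuous.pow (Real.continuous_sin.comp (continuous_const.mul continuous_id)) k).continuousOn
      · exact continuousOn_id
      · intro s hs; exact ne_of_gt hs.1
    · intro s hs
      rw [interior_Ioc] at hs
      rw [(hderiv s hs).deriv]
      have hs0 : 0 < s := hs.1
      have hds : 0 < d * s := mul_pos hd0 hs0
      have hdsR : d * s ≤ R := by
        have := mul_le_mul_of_nonneg_left hs.2.le hd0.le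
        nlinarith
      have hsin : 0 < Real.sin (d * s) := by
        apply Real.sin_pos_of_pos_of_lt_pi hds
        nlinarith [Real.pi_pos]
      have hkey := key_sin_lt R hR k hk' hds hdsR
      have hnum : 0 < (k : ℝ) * Real.sin (d * s) ^ (k - 1) * (Real.cos (d * s) * d) * s
          - Real.sin (d * s) ^ k * 1 := by
        have hpow : Real.sin (d * s) ^ k = Real.sin (d * s) ^ (k - 1) * Real.sin (d * s) := by
          rw [← pow_succ]
          congr 1
          omega
        rw [hpow]
        have hppos : 0 < Real.sin (d * s) ^ (k - 1) := pow_pos hsin _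
        have : Real.sin (d * s) < (k : ℝ) * (d * s * Real.cos (d * s)) := hkey
        nlinarith
      positivity
  -- apply monotonicity: f t < f 1
  have hft : f t < f 1 := hmono ⟨ht0, ht1.le⟩ ⟨one_pos, le_refl 1⟩ ht1
  have hkey2 : Real.sin (d * t) ^ k ≤ t * Real.sin d ^ k := by
    have : Real.sin (d * t) ^ k / t < Real.sin d ^ k := by simpa [hf] using hft
    rw [div_lt_iff₀ ht0] at this
    nlinarith [pow_pos (Real.sin_pos_of_pos_of_lt_pi hd0 (by nlinarith [Real.pi_pos])) k]
  -- take k-th roots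
  have hsind : 0 ≤ Real.sin d := by
    apply Real.sin_nonneg_of_nonneg_of_le_pi hd0.le
    nlinarith [Real.pi_pos]
  have hsindt : 0 ≤ Real.sin (d * t) := by
    apply Real.sin_nonneg_of_nonneg_of_le_pi (by positivity)
    nlinarith [Real.pi_pos]
  have hrpos : 0 ≤ t ^ ((1:ℝ)/(k:ℝ)) * Real.sin d := by positivity
  rw [← pow_le_pow_iff_left₀ hsindt hrpos hkne]
  calc Real.sin (d * t) ^ k ≤ t * Real.sin d ^ k := hkey2
    _ = (t ^ ((1:ℝ)/(k:ℝ)) * Real.sin d) ^ k := by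
        rw [mul_pow, one_div, Real.rpow_inv_natCast_pow ht0.le hkne]
end

section
/- Let a, b, c ∈ [0, π] with a ≥ b and let γ ∈ [0, π]. Suppose hav c = hav(a − b) + sin a · sin b · hav γ (the law of haversines). If t ∈ [0,1] and k ≥ 2 is such that sin(d·t) ≤ t^(1/k)·sin d for all d ∈ [0, a], and a − b ∈ [0, π/2), then the quantity c_t defined by hav c_t = hav(t(a − b)) + sin(ta)·sin(tb)·hav γ satisfies hav c_t ≤ t^(2/k) · hav c. -/
open Real

/-- The haversine function. -/
noncomputable def hav (θ : ℝ) : ℝ := Real.sin (θ / 2) ^ 2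

theorem hav_scaled_triangle_bound
    (a b c γ : ℝ) (ha : a ∈ Set.Icc (0 : ℝ) π) (hb : b ∈ Set.Icc (0 : ℝ) π)
    (hc : c ∈ Set.Icc (0 : ℝ) π) (hγ : γ ∈ Set.Icc (0 : ℝ) π)
    (hab : b ≤ a)
    (hlaw : hav c = hav (a - b) + Real.sin a * Real.sin b * hav γ)
    (t : ℝ) (ht : t ∈ Set.Icc (0 : ℝ) 1)
    (k : ℕ) (hk : 2 ≤ k)
    (hsin : ∀ d ∈ Set.Icc (0 : ℝ) a, Real.sin (d * t) ≤ t ^ ((1 : ℝ) / (k : ℝ)) * Real.sin d)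
    (hab' : a - b < π / 2)
    (ct : ℝ)
    (hct : hav ct = hav (t * (a - b)) + Real.sin (t * a) * Real.sin (t * b) * hav γ) :
    hav ct ≤ t ^ ((2 : ℝ) / (k : ℝ)) * hav c := by
  obtain ⟨ha0, haπ⟩ := ha
  obtain ⟨hb0, hbπ⟩ := hb
  obtain ⟨ht0, ht1⟩ := ht
  have hk0 : (0:ℝ) < k := by positivity
  have hpow : t ^ ((1:ℝ)/(k:ℝ)) * t ^ ((1:ℝ)/(k:ℝ)) = t ^ ((2:ℝ)/(k:ℝ)) := by
    rw [← Real.rpow_add' ht0 (by positivity)]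
    ring_nf
  have hpnn : 0 ≤ t ^ ((1:ℝ)/(k:ℝ)) := Real.rpow_nonneg ht0 _
  -- sine bounds
  have hsa : Real.sin (t * a) ≤ t ^ ((1:ℝ)/(k:ℝ)) * Real.sin a := by
    have := hsin a ⟨ha0, le_refl a⟩; linarith [this, (by ring_nf : Real.sin (a*t) = Real.sin (t*a))]
  have hsb : Real.sin (t * b) ≤ t ^ ((1:ℝ)/(k:ℝ)) * Real.sin b := by
    have := hsin b ⟨hb0, hab⟩
    have he : Real.sin (b*t) = Real.sin (t*b) := by ring_nf
    linarith
  have hsab : Real.sin (t * (a-b) / 2) ≤ t ^ ((1:ℝ)/(k:ℝ)) * Real.sin ((a-b)/2) := by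
    have hmem : (a-b)/2 ∈ Set.Icc (0:ℝ) a := ⟨by linarith, by linarith⟩
    have := hsin _ hmem
    have he : Real.sin ((a-b)/2*t) = Real.sin (t*(a-b)/2) := by ring_nf
    linarith
  -- nonnegativity
  have hta0 : 0 ≤ Real.sin (t * a) :=
    Real.sin_nonneg_of_nonneg_of_le_pi (by positivity) (by nlinarith)
  have htb0 : 0 ≤ Real.sin (t * b) :=
    Real.sin_nonneg_of_nonneg_of_le_pi (by positivity) (by nlinarith)
  have htab0 : 0 ≤ Real.sin (t * (a-b) / 2) := by
    apply Real.sin_nonneg_of_nonneg_of_le_pi (by nlinarith)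
    nlinarith [Real.pi_pos]
  have hγ0 : 0 ≤ hav γ := sq_nonneg _
  have hsa0 : 0 ≤ Real.sin a := Real.sin_nonneg_of_nonneg_of_le_pi ha0 haπ
  have hsb0 : 0 ≤ Real.sin b := Real.sin_nonneg_of_nonneg_of_le_pi hb0 hbπ
  -- combine
  have hsab2 : 0 ≤ Real.sin ((a-b)/2) :=
    Real.sin_nonneg_of_nonneg_of_le_pi (by linarith) (by nlinarith [Real.pi_pos])
  have h1 : hav (t * (a-b)) ≤ t ^ ((2:ℝ)/(k:ℝ)) * hav (a-b) := by
    have h := mul_le_mul hsab hsab htab0 (mul_nonneg hpnn hsab2)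
    unfold hav
    calc Real.sin (t*(a-b)/2) ^ 2 = Real.sin (t*(a-b)/2) * Real.sin (t*(a-b)/2) := by ring
      _ ≤ (t ^ ((1:ℝ)/(k:ℝ)) * Real.sin ((a-b)/2)) * (t ^ ((1:ℝ)/(k:ℝ)) * Real.sin ((a-b)/2)) := h
      _ = (t ^ ((1:ℝ)/(k:ℝ)) * t ^ ((1:ℝ)/(k:ℝ))) * Real.sin ((a-b)/2)^2 := by ring
      _ = t ^ ((2:ℝ)/(k:ℝ)) * Real.sin ((a-b)/2)^2 := by rw [hpow]
  have h2 : Real.sin (t*a) * Real.sin (t*b) ≤ t ^ ((2:ℝ)/(k:ℝ)) * (Real.sin a * Real.sin b) := by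
    have h := mul_le_mul hsa hsb htb0 (mul_nonneg hpnn hsa0)
    calc Real.sin (t*a) * Real.sin (t*b)
        ≤ (t ^ ((1:ℝ)/(k:ℝ)) * Real.sin a) * (t ^ ((1:ℝ)/(k:ℝ)) * Real.sin b) := h
      _ = (t ^ ((1:ℝ)/(k:ℝ)) * t ^ ((1:ℝ)/(k:ℝ))) * (Real.sin a * Real.sin b) := by ring
      _ = t ^ ((2:ℝ)/(k:ℝ)) * (Real.sin a * Real.sin b) := by rw [hpow]
  rw [hct, hlaw]
  have h3 : Real.sin (t*a) * Real.sin (t*b) * hav γ ≤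
      t ^ ((2:ℝ)/(k:ℝ)) * (Real.sin a * Real.sin b) * hav γ :=
    mul_le_mul_of_nonneg_right h2 hγ0
  linarith [h3, h1]
end

section
/- Let a, b, c, c_t ∈ [0, π] with hav c_t ≤ t^(2/k) · hav c for some t ∈ [0,1] and k ≥ 2. Then c_t ≤ t^(1/k) · c. -/
open Real

theorem dist_le_of_hav_le
    (a b c ct : ℝ) (ha : a ∈ Set.Icc (0 : ℝ) π) (hb : b ∈ Set.Icc (0 : ℝ) π)
    (hc : c ∈ Set.Icc (0 : ℝ) π) (hct : ct ∈ Set.Icc (0 : ℝ) π)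
    (t : ℝ) (ht : t ∈ Set.Icc (0 : ℝ) 1) (k : ℕ) (hk : 2 ≤ k)
    (h : hav ct ≤ t ^ ((2 : ℝ) / (k : ℝ)) * hav c) :
    ct ≤ t ^ ((1 : ℝ) / (k : ℝ)) * c := by
  set s := t ^ ((1 : ℝ) / (k : ℝ)) with hs
  have hs0 : 0 ≤ s := Real.rpow_nonneg ht.1 _
  have hs1 : s ≤ 1 := Real.rpow_le_one ht.1 ht.2 (by positivity)
  -- rewrite the exponent
  have hexp : t ^ ((2 : ℝ) / (k : ℝ)) = s ^ 2 := by
    rw [hs, ← Real.rpow_natCast (t ^ ((1:ℝ)/(k:ℝ))) 2, ← Real.rpow_mul ht.1]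
    norm_num
    ring_nf
  rw [hexp] at h
  have hsinct : 0 ≤ Real.sin (ct / 2) :=
    Real.sin_nonneg_of_nonneg_of_le_pi (by linarith [hct.1]) (by linarith [hct.2, Real.pi_pos])
  have hsinc : 0 ≤ Real.sin (c / 2) :=
    Real.sin_nonneg_of_nonneg_of_le_pi (by linarith [hc.1]) (by linarith [hc.2, Real.pi_pos])
  -- take square roots
  have h1 : Real.sin (ct / 2) ≤ s * Real.sin (c / 2) := by
    have := Real.sqrt_le_sqrt h
    rwa [hav, hav, Real.sqrt_sq hsinct, show s ^ 2 * Real.sin (c/2) ^ 2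
      = (s * Real.sin (c/2)) ^ 2 by ring, Real.sqrt_sq (by positivity)] at this
  -- concavity: s * sin x ≤ sin (s * x)
  have h2 : s * Real.sin (c / 2) ≤ Real.sin (s * (c / 2)) := by
    have hmem : c / 2 ∈ Set.Icc (0 : ℝ) π :=
      ⟨by linarith [hc.1], by linarith [hc.2, Real.pi_pos]⟩
    have h0 : (0 : ℝ) ∈ Set.Icc (0 : ℝ) π := ⟨le_refl _, Real.pi_pos.le⟩
    have := strictConcaveOn_sin_Icc.concaveOn.2 hmem h0 hs0
      (by linarith : (0:ℝ) ≤ 1 - s) (by ring)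
    simpa using this
  have h3 : Real.sin (ct / 2) ≤ Real.sin (s * (c / 2)) := le_trans h1 h2
  -- invert sin on [-π/2, π/2]
  have hct2 : ct / 2 ∈ Set.Icc (-(π/2)) (π/2) :=
    ⟨by linarith [hct.1, Real.pi_pos], by linarith [hct.2]⟩
  have h0sc : 0 ≤ s * (c / 2) := mul_nonneg hs0 (by linarith [hc.1])
  have hsc2 : s * (c / 2) ∈ Set.Icc (-(π/2)) (π/2) := by
    refine ⟨by linarith [Real.pi_pos], ?_⟩
    nlinarith [hc.1, hc.2]
  have hfin := (Real.strictMonoOn_sin.le_iff_le hct2 hsc2).mp h3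
  have : s * (c / 2) = s * c / 2 := by ring
  linarith
end

section
/- Let C be a bounded metric space and f : C → C a nonexpansive map such that for every n ≥ 1 there exists β_n ∈ (0,1) with ρ(f(y), f(z)) ≤ β_n · ρ(y,z) whenever ρ(y,z) ≥ diam(C)/n. Then f is contractive in the sense of Rakotch. -/
/-- `f` is contractive in the sense of Rakotch: there is a decreasing
`φ : [0, diam C] → [0,1]` with `φ s < 1` for `s > 0` and
`dist (f y) (f z) ≤ φ (dist y z) * dist y z`. -/
def RakotchSelf {C : Type*} [MetricSpace C] (f : C → C) : Prop :=
  ∃ φ : ℝ → ℝ,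
    (∀ s t : ℝ, 0 ≤ s → s ≤ t → t ≤ Metric.diam (Set.univ : Set C) → φ t ≤ φ s) ∧
    (∀ s : ℝ, 0 ≤ s → s ≤ Metric.diam (Set.univ : Set C) → φ s ∈ Set.Icc (0 : ℝ) 1) ∧
    (∀ s : ℝ, 0 < s → s ≤ Metric.diam (Set.univ : Set C) → φ s < 1) ∧
    ∀ y z : C, dist (f y) (f z) ≤ φ (dist y z) * dist y z

theorem rakotch_of_uniform_contraction_on_large_distances
    {C : Type*} [MetricSpace C] (hbd : Bornology.IsBounded (Set.univ : Set C))
    (f : C → C) (hf : ∀ y z : C, dist (f y) (f z) ≤ dist y z)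
    (h : ∀ n : ℕ, 1 ≤ n → ∃ β : ℝ, 0 < β ∧ β < 1 ∧
      ∀ y z : C, Metric.diam (Set.univ : Set C) / n ≤ dist y z →
        dist (f y) (f z) ≤ β * dist y z) :
    RakotchSelf f := by
  classical
  choose β hβ0 hβ1 hβ2 using h
  set D := Metric.diam (Set.univ : Set C) with hD
  have hD0 : 0 ≤ D := Metric.diam_nonneg
  set γ : ℕ → ℝ := fun k => β (k+1) (Nat.le_add_left 1 k) with hγ
  have hγ0 : ∀ k, 0 < γ k := fun k => hβ0 _ _
  have hγ1 : ∀ k, γ k < 1 := fun k => hβ1 _ _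
  have hγ2 : ∀ k (y z : C), D / (k+1 : ℕ) ≤ dist y z →
      dist (f y) (f z) ≤ γ k * dist y z := fun k => hβ2 _ _
  set M : ℕ → ℝ := fun n => (Finset.range (n+1)).sup' (by simp) γ with hM
  have hMmono : Monotone M := fun a b hab =>
    Finset.sup'_mono γ (Finset.range_subset_range.2 (by omega)) (by simp)
  have hM1 : ∀ n, M n < 1 := fun n => (Finset.sup'_lt_iff (by simp)).2 (fun k _ => hγ1 k)
  have hM0 : ∀ n, 0 ≤ M n := fun n =>
    le_trans (hγ0 0).le (Finset.le_sup' γ (by simp))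
  have key : ∀ y z : C, 0 < dist y z → dist (f y) (f z) ≤ M ⌈D / dist y z⌉₊ * dist y z := by
    intro y z hd
    set d := dist y z
    set n := ⌈D / d⌉₊ with hn
    have hk : (n - 1) ∈ Finset.range (n + 1) := by simp
    have hγM : γ (n - 1) ≤ M n := Finset.le_sup' γ hk
    have hthresh : D / ((n - 1 : ℕ) + 1 : ℕ) ≤ d := by
      rcases Nat.eq_zero_or_pos n with h0 | h1
      · have hDle : D / d ≤ 0 := by
          by_contra hc
          push_neg at hc
          have := Nat.ceil_pos.2 hc
          omega
        have : D ≤ 0 := by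
          rcases div_nonpos_iff.1 hDle with ⟨h1, h2⟩ | ⟨h1, h2⟩ <;> linarith
        have hDz : D = 0 := le_antisymm this hD0
        simp [h0, hDz]
        linarith
      · have hnn : (n - 1 : ℕ) + 1 = n := by omega
        rw [hnn]
        have hle : D / d ≤ (n : ℝ) := Nat.le_ceil _
        have hnpos : (0 : ℝ) < (n : ℝ) := by exact_mod_cast h1
        rw [div_le_iff₀ hnpos]
        have := (div_le_iff₀ hd).1 hle
        nlinarith
    calc dist (f y) (f z) ≤ γ (n - 1) * d := hγ2 _ _ _ hthresh
      _ ≤ M n * d := by nlinarith [hγM, hd]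
  refine ⟨fun s => if s ≤ 0 then 1 else M ⌈D / s⌉₊, ?_, ?_, ?_, ?_⟩
  · intro s t hs hst htD
    by_cases hs0 : s ≤ 0
    · simp [hs0]
      by_cases ht0 : t ≤ 0
      · simp [ht0]
      · simp [ht0]; exact (hM1 _).le
    · have ht0 : ¬ t ≤ 0 := by push_neg at hs0 ⊢; linarith
      simp [hs0, ht0]
      apply hMmono
      apply Nat.ceil_le_ceil
      push_neg at hs0
      exact div_le_div_of_nonneg_left hD0 hs0 hst
  · intro s hs hsD
    by_cases hs0 : s ≤ 0
    · simp [hs0]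
    · simp [hs0]
      exact ⟨hM0 _, (hM1 _).le⟩
  · intro s hs hsD
    have hs0 : ¬ s ≤ 0 := not_le.2 hs
    simp [hs0]
    exact hM1 _
  · intro y z
    by_cases hd : dist y z ≤ 0
    · have hdz : dist y z = 0 := le_antisymm hd dist_nonneg
      have := hf y z
      rw [hdz] at this ⊢
      simpa using this
    · push_neg at hd
      simp [not_le.2 hd]
      exact key y z hd
end
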